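/- For the relativistic Toda lattice, the quadratic bracket defined by {a_i, a_{i+1}} = a_i a_{i+1}, {a_i, b_i} = −a_i b_i, {a_i, b_{i+1}} = a_i b_{i+1}, all other coordinate brackets zero, satisfies the Jacobi identity. -/

import Mathlib

/-- Index set for relativistic Toda variables `(a_1, …, a_{N-1}, b_1, …, b_N)` (0-based). -/
abbrev RTodaIdx (N : ℕ) := Fin (N - 1) ⊕ Fin N

/-- The value of the `a`-variable with (0-based) index `m`, zero out of range. -/
noncomputable def av {N : ℕ} (x : RTodaIdx N → ℝ) (m : ℕ) : ℝ :=
  if h : m < N - 1 then x (.inl ⟨m, h⟩) else 0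

/-- The value of the `b`-variable with (0-based) index `m`, zero out of range. -/
noncomputable def bv {N : ℕ} (x : RTodaIdx N → ℝ) (m : ℕ) : ℝ :=
  if h : m < N then x (.inr ⟨m, h⟩) else 0

/-- Structure matrix of the quadratic relativistic Toda bracket:
`{a_i, a_{i+1}} = a_i a_{i+1}`, `{a_i, b_i} = −a_i b_i`,
`{a_i, b_{i+1}} = a_i b_{i+1}`, all other coordinate brackets zero. -/
noncomputable def relQuadP (N : ℕ) : RTodaIdx N → RTodaIdx N → (RTodaIdx N → ℝ) → ℝ
  | .inl i, .inl j, x =>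
      if (j : ℕ) = (i : ℕ) + 1 then av x i * av x j
      else if (i : ℕ) = (j : ℕ) + 1 then -(av x j * av x i) else 0
  | .inl i, .inr j, x =>
      if (j : ℕ) = (i : ℕ) then -(av x i * bv x j)
      else if (j : ℕ) = (i : ℕ) + 1 then av x i * bv x j else 0
  | .inr j, .inl i, x =>
      -(if (j : ℕ) = (i : ℕ) then -(av x i * bv x j)
        else if (j : ℕ) = (i : ℕ) + 1 then av x i * bv x j else 0)
  | .inr _, .inr _, _ => 0

/-- Partial derivative in the `s`-th coordinate direction. -/
noncomputable def pd {N : ℕ} (f : (RTodaIdx N → ℝ) → ℝ) (s : RTodaIdx N) (x : RTodaIdx N → ℝ) : ℝ :=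
  fderiv ℝ f x (Pi.single s 1)

noncomputable def epsC (N : ℕ) : RTodaIdx N → RTodaIdx N → ℝ
  | .inl i, .inl j => if (j : ℕ) = (i : ℕ) + 1 then 1 else if (i : ℕ) = (j : ℕ) + 1 then -1 else 0
  | .inl i, .inr j => if (j : ℕ) = (i : ℕ) then -1 else if (j : ℕ) = (i : ℕ) + 1 then 1 else 0
  | .inr j, .inl i => -(if (j : ℕ) = (i : ℕ) then -1 else if (j : ℕ) = (i : ℕ) + 1 then 1 else 0)
  | .inr _, .inr _ => 0

lemma av_coe {N : ℕ} (x : RTodaIdx N → ℝ) (i : Fin (N-1)) : av x i = x (.inl i) := by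
  simp [av, i.isLt]

lemma bv_coe {N : ℕ} (x : RTodaIdx N → ℝ) (i : Fin N) : bv x i = x (.inr i) := by
  simp [bv, i.isLt]

lemma relQuadP_eq (N : ℕ) (u v : RTodaIdx N) :
    relQuadP N u v = fun x => epsC N u v * x u * x v := by
  funext x
  cases u with
  | inl i => cases v with
    | inl j => simp only [relQuadP, epsC, av_coe]; split_ifs <;> ring
    | inr j => simp only [relQuadP, epsC, av_coe, bv_coe]; split_ifs <;> ring
  | inr j => cases v with
    | inl i => simp only [relQuadP, epsC, av_coe, bv_coe]; split_ifs <;> ring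
    | inr _ => simp [relQuadP, epsC]

lemma epsC_antisymm (N : ℕ) (u v : RTodaIdx N) : epsC N v u = -epsC N u v := by
  cases u <;> cases v <;> simp only [epsC]
  all_goals try norm_num
  all_goals split_ifs <;> (try (exfalso; omega)) <;> ring

lemma pd_cmul {N : ℕ} (c : ℝ) (v w s : RTodaIdx N) (x : RTodaIdx N → ℝ) :
    pd (fun x => c * x v * x w) s x
      = c * (x v * (Pi.single s 1 : RTodaIdx N → ℝ) w
           + x w * (Pi.single s 1 : RTodaIdx N → ℝ) v) := by
  have hv : HasFDerivAt (fun y : RTodaIdx N → ℝ => y v)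
      (ContinuousLinearMap.proj v : (RTodaIdx N → ℝ) →L[ℝ] ℝ) x :=
    (ContinuousLinearMap.proj (R := ℝ) (φ := fun _ : RTodaIdx N => ℝ) v).hasFDerivAt
  have hw : HasFDerivAt (fun y : RTodaIdx N → ℝ => y w)
      (ContinuousLinearMap.proj w : (RTodaIdx N → ℝ) →L[ℝ] ℝ) x :=
    (ContinuousLinearMap.proj (R := ℝ) (φ := fun _ : RTodaIdx N => ℝ) w).hasFDerivAt
  have h := (hv.mul hw).const_mul c
  have h' : HasFDerivAt (fun y : RTodaIdx N → ℝ => c * y v * y w)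
      (c • (x v • (ContinuousLinearMap.proj w : (RTodaIdx N → ℝ) →L[ℝ] ℝ)
        + x w • (ContinuousLinearMap.proj v : (RTodaIdx N → ℝ) →L[ℝ] ℝ))) x := by
    refine h.congr_of_eventuallyEq (Filter.Eventually.of_forall fun y => ?_)
    simp only [Pi.mul_apply]; ring
  rw [pd, h'.fderiv]
  simp [ContinuousLinearMap.proj_apply, mul_add]

/-- The quadratic relativistic Toda bracket satisfies the Jacobi identity. -/
theorem relQuadToda_jacobi (N : ℕ) (x : RTodaIdx N → ℝ) (u v w : RTodaIdx N) :
    ∑ s : RTodaIdx N, (relQuadP N s u x * pd (relQuadP N v w) s x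
      + relQuadP N s v x * pd (relQuadP N w u) s x
      + relQuadP N s w x * pd (relQuadP N u v) s x) = 0 := by
  simp only [relQuadP_eq, pd_cmul, Pi.single_apply]
  simp only [mul_ite, ite_mul, mul_one, mul_zero, zero_mul, mul_add, add_mul,
    Finset.sum_add_distrib, Finset.sum_ite_eq, Finset.sum_ite_eq', Finset.mem_univ, if_true]
  rw [epsC_antisymm N u v, epsC_antisymm N v w, epsC_antisymm N w u]
  ring
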